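/- Let 0 < λ₁ ≤ … ≤ λ_m < 1 be reals, let ã₁ > … > ã_p > 1 be reals, and let d̃₁, …, d̃_p be positive integers. Suppose there is 1 ≤ k ≤ p with Σ_{j=1}^{k-1} ã_j d̃_j ≤ Σ_{i=1}^m λ_i < Σ_{j=1}^k ã_j d̃_j. Define κ as the minimum over 1 ≤ j ≤ m of (Σ_{k'=1}^p ã_{k'} d̃_{k'} + Σ_{i=1}^j (λ_j - λ_i))/λ_j and over 1 ≤ l ≤ p of Σ_{j=1}^l (ã_j/ã_l) d̃_j + Σ_{j=l+1}^p d̃_j + Σ_{i=1}^m (1 - λ_i/ã_l). Then κ = Σ_{j=1}^k (ã_j/ã_k) d̃_j + Σ_{j=k+1}^p d̃_j + Σ_{i=1}^m (1 - λ_i/ã_k), and κ lies in the interval (m + Σ_{j=k+1}^p d̃_j, m + Σ_{j=k}^p d̃_j]. -/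

import Mathlib

lemma myIcc (n : ℕ) : Finset.Icc 1 n = Finset.Ioc 0 n := Finset.Icc_add_one_left_eq_Ioc 0 n

lemma mysplit (f : ℕ → ℝ) {a b c : ℕ} (hab : a ≤ b) (hbc : b ≤ c) :
    ∑ j ∈ Finset.Icc (a + 1) c, f j
      = (∑ j ∈ Finset.Icc (a + 1) b, f j) + ∑ j ∈ Finset.Icc (b + 1) c, f j := by
  rw [Finset.Icc_add_one_left_eq_Ioc, Finset.Icc_add_one_left_eq_Ioc, Finset.Icc_add_one_left_eq_Ioc,
    ← Finset.sum_Ioc_consecutive f hab hbc]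

lemma mysplit1 (f : ℕ → ℝ) {b c : ℕ} (hbc : b ≤ c) :
    ∑ j ∈ Finset.Icc 1 c, f j
      = (∑ j ∈ Finset.Icc 1 b, f j) + ∑ j ∈ Finset.Icc (b + 1) c, f j := by
  rw [myIcc, myIcc, Finset.Icc_add_one_left_eq_Ioc, ← Finset.sum_Ioc_consecutive f (Nat.zero_le b) hbc]

lemma mysplitlow (f : ℕ → ℝ) {a b : ℕ} (hab : a ≤ b) :
    ∑ j ∈ Finset.Icc a b, f j = f a + ∑ j ∈ Finset.Icc (a + 1) b, f j := by
  have h : Finset.Icc a b = insert a (Finset.Icc (a + 1) b) := by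
    ext x; simp only [Finset.mem_Icc, Finset.mem_insert]; omega
  rw [h, Finset.sum_insert (by simp)]

lemma Gval (lam ta : ℕ → ℝ) (td : ℕ → ℕ) (m p l : ℕ) :
    (∑ j ∈ Finset.Icc 1 l, (ta j / ta l) * (td j : ℝ))
      + (∑ j ∈ Finset.Icc (l + 1) p, (td j : ℝ))
      + ∑ i ∈ Finset.Icc 1 m, (1 - lam i / ta l)
    = ((∑ j ∈ Finset.Icc 1 l, ta j * (td j : ℝ)) - ∑ i ∈ Finset.Icc 1 m, lam i) / ta l
      + (∑ j ∈ Finset.Icc (l + 1) p, (td j : ℝ)) + (m : ℝ) := by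
  rw [Finset.sum_sub_distrib, Finset.sum_const, Nat.card_Icc, sub_div]
  simp only [Finset.sum_div, nsmul_eq_mul, Nat.add_sub_cancel, mul_one,
    div_mul_eq_mul_div]
  ring

theorem stmt10 (m p : ℕ) (hm : 1 ≤ m) (hp : 1 ≤ p)
    (lam : ℕ → ℝ) (ta : ℕ → ℝ) (td : ℕ → ℕ)
    (hlampos : ∀ i, 1 ≤ i → i ≤ m → 0 < lam i)
    (hlamlt1 : ∀ i, 1 ≤ i → i ≤ m → lam i < 1)
    (hlammono : ∀ i j, 1 ≤ i → i ≤ j → j ≤ m → lam i ≤ lam j)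
    (htagt1 : ∀ k, 1 ≤ k → k ≤ p → 1 < ta k)
    (htadec : ∀ k l, 1 ≤ k → k < l → l ≤ p → ta l < ta k)
    (htdpos : ∀ k, 1 ≤ k → k ≤ p → 0 < td k)
    (k : ℕ) (hk1 : 1 ≤ k) (hkp : k ≤ p)
    (hlow : ∑ j ∈ Finset.Icc 1 (k - 1), ta j * (td j : ℝ)
              ≤ ∑ i ∈ Finset.Icc 1 m, lam i)
    (hhigh : ∑ i ∈ Finset.Icc 1 m, lam i
              < ∑ j ∈ Finset.Icc 1 k, ta j * (td j : ℝ))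
    (hnem : (Finset.Icc 1 m).Nonempty) (hnep : (Finset.Icc 1 p).Nonempty)
    (κ : ℝ)
    (hκ : κ = min
        ((Finset.Icc 1 m).inf' hnem (fun j =>
          ((∑ k' ∈ Finset.Icc 1 p, ta k' * (td k' : ℝ))
            + ∑ i ∈ Finset.Icc 1 j, (lam j - lam i)) / lam j))
        ((Finset.Icc 1 p).inf' hnep (fun l =>
          (∑ j ∈ Finset.Icc 1 l, (ta j / ta l) * (td j : ℝ))
            + (∑ j ∈ Finset.Icc (l + 1) p, (td j : ℝ))
            + ∑ i ∈ Finset.Icc 1 m, (1 - lam i / ta l)))) :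
    κ = (∑ j ∈ Finset.Icc 1 k, (ta j / ta k) * (td j : ℝ))
          + (∑ j ∈ Finset.Icc (k + 1) p, (td j : ℝ))
          + ∑ i ∈ Finset.Icc 1 m, (1 - lam i / ta k) ∧
      (m : ℝ) + ∑ j ∈ Finset.Icc (k + 1) p, (td j : ℝ) < κ ∧
      κ ≤ (m : ℝ) + ∑ j ∈ Finset.Icc k p, (td j : ℝ) := by
  have htakpos : (0:ℝ) < ta k := lt_trans one_pos (htagt1 k hk1 hkp)
  have htakne : ta k ≠ 0 := ne_of_gt htakpos
  have hk' : k - 1 + 1 = k := Nat.succ_pred_eq_of_pos hk1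
  have htamono : ∀ i j, 1 ≤ i → i ≤ j → j ≤ p → ta j ≤ ta i := by
    intro i j h1 hij hjp
    rcases eq_or_lt_of_le hij with h | h
    · subst h; exact le_refl _
    · exact (htadec i j h1 h hjp).le
  set L := ∑ i ∈ Finset.Icc 1 m, lam i with hL
  set S := ∑ j ∈ Finset.Icc 1 p, ta j * (td j : ℝ) with hS
  set Ak := ∑ j ∈ Finset.Icc 1 k, ta j * (td j : ℝ) with hAk
  set Dk := ∑ j ∈ Finset.Icc (k + 1) p, (td j : ℝ) with hDk
  clear_value L S Ak Dk
  have hAkL : 0 < Ak - L := sub_pos.2 hhigh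
  have hsplitk : Ak = (∑ j ∈ Finset.Icc 1 (k - 1), ta j * (td j : ℝ)) + ta k * (td k : ℝ) := by
    rw [hAk, mysplit1 (fun j => ta j * (td j : ℝ)) (show k - 1 ≤ k by omega), hk',
      Finset.Icc_self, Finset.sum_singleton]
  have hAkdk : Ak - L ≤ ta k * (td k : ℝ) := by linarith [hlow, hsplitk]
  have hdivpos : 0 < (Ak - L) / ta k := div_pos hAkL htakpos
  have hdivle : (Ak - L) / ta k ≤ (td k : ℝ) := by
    rw [div_le_iff₀ htakpos]; nlinarith [hAkdk]
  -- the G family inequality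
  have hGle : ∀ l, 1 ≤ l → l ≤ p →
      (Ak - L) / ta k + Dk
        ≤ ((∑ j ∈ Finset.Icc 1 l, ta j * (td j : ℝ)) - L) / ta l
            + ∑ j ∈ Finset.Icc (l + 1) p, (td j : ℝ) := by
    intro l hl1 hlp
    have htalpos : (0:ℝ) < ta l := lt_trans one_pos (htagt1 l hl1 hlp)
    rcases le_or_gt k l with hkl | hlk
    · -- k ≤ l
      have e1 : (∑ j ∈ Finset.Icc 1 l, ta j * (td j : ℝ))
          = Ak + ∑ j ∈ Finset.Icc (k + 1) l, ta j * (td j : ℝ) := by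
        rw [hAk]; exact mysplit1 _ hkl
      have e2 : Dk = (∑ j ∈ Finset.Icc (k + 1) l, (td j : ℝ))
          + ∑ j ∈ Finset.Icc (l + 1) p, (td j : ℝ) := by
        rw [hDk]; exact mysplit (fun j => (td j : ℝ)) hkl hlp
      have h1 : (Ak - L) / ta k ≤ (Ak - L) / ta l :=
        div_le_div_of_nonneg_left hAkL.le htalpos (htamono k l hk1 hkl hlp)
      have h2 : (∑ j ∈ Finset.Icc (k + 1) l, (td j : ℝ))
          ≤ (∑ j ∈ Finset.Icc (k + 1) l, ta j * (td j : ℝ)) / ta l := by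
        rw [Finset.sum_div]
        apply Finset.sum_le_sum
        intro j hj
        rw [Finset.mem_Icc] at hj
        rw [le_div_iff₀ htalpos]
        have hta := htamono j l (by omega) hj.2 hlp
        nlinarith [show (0:ℝ) ≤ ((td j : ℕ) : ℝ) from Nat.cast_nonneg (td j)]
      have e1' : ((∑ j ∈ Finset.Icc 1 l, ta j * (td j : ℝ)) - L) / ta l
          = (Ak - L) / ta l + (∑ j ∈ Finset.Icc (k + 1) l, ta j * (td j : ℝ)) / ta l := by
        rw [e1]; ring
      linarith [h1, h2, e2, e1']
    · -- l < k
      have hlk1 : l ≤ k - 1 := by omega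
      have hk1p : k - 1 ≤ p := by omega
      have e2 : (∑ j ∈ Finset.Icc (l + 1) p, (td j : ℝ))
          = (∑ j ∈ Finset.Icc (l + 1) (k - 1), (td j : ℝ)) + ((td k : ℝ) + Dk) := by
        rw [hDk, mysplit (fun j => (td j : ℝ)) hlk1 hk1p, hk',
          mysplitlow (fun j => (td j : ℝ)) hkp]
      have e3 : (∑ j ∈ Finset.Icc 1 (k - 1), ta j * (td j : ℝ))
          = (∑ j ∈ Finset.Icc 1 l, ta j * (td j : ℝ))
            + ∑ j ∈ Finset.Icc (l + 1) (k - 1), ta j * (td j : ℝ) :=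
        mysplit1 _ hlk1
      have e4 : (Ak - L) / ta k
          + (L - ∑ j ∈ Finset.Icc 1 (k - 1), ta j * (td j : ℝ)) / ta k = (td k : ℝ) := by
        have h : Ak - L + (L - ∑ j ∈ Finset.Icc 1 (k - 1), ta j * (td j : ℝ))
            = ta k * (td k : ℝ) := by rw [hsplitk]; ring
        rw [← add_div, h, mul_div_cancel_left₀ _ htakne]
      have h5 : (L - ∑ j ∈ Finset.Icc 1 (k - 1), ta j * (td j : ℝ)) / ta l
          ≤ (L - ∑ j ∈ Finset.Icc 1 (k - 1), ta j * (td j : ℝ)) / ta k :=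
        div_le_div_of_nonneg_left (by linarith [hlow]) htakpos (htamono l k hl1 hlk.le hkp)
      have h7 : (∑ j ∈ Finset.Icc (l + 1) (k - 1), ta j * (td j : ℝ)) / ta l
          ≤ ∑ j ∈ Finset.Icc (l + 1) (k - 1), (td j : ℝ) := by
        rw [Finset.sum_div]
        apply Finset.sum_le_sum
        intro j hj
        rw [Finset.mem_Icc] at hj
        rw [div_le_iff₀ htalpos]
        have hta := htamono l j hl1 (by omega) (by omega)
        nlinarith [show (0:ℝ) ≤ ((td j : ℕ) : ℝ) from Nat.cast_nonneg (td j)]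
      have e5 : ((∑ j ∈ Finset.Icc 1 l, ta j * (td j : ℝ)) - L) / ta l
          + (∑ j ∈ Finset.Icc (l + 1) (k - 1), ta j * (td j : ℝ)) / ta l
          = ((∑ j ∈ Finset.Icc 1 (k - 1), ta j * (td j : ℝ)) - L) / ta l := by
        rw [e3]; ring
      have e8 : ((∑ j ∈ Finset.Icc 1 (k - 1), ta j * (td j : ℝ)) - L) / ta l
          + (L - ∑ j ∈ Finset.Icc 1 (k - 1), ta j * (td j : ℝ)) / ta l = 0 := by
        ring
      linarith [e2, e4, h5, h7, e5, e8]
  -- the F family inequality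
  have hDknn : (0:ℝ) ≤ Dk := by
    rw [hDk]; exact Finset.sum_nonneg fun i _ => Nat.cast_nonneg _
  have hFle : ∀ j, 1 ≤ j → j ≤ m →
      (Ak - L) / ta k + Dk + (m : ℝ)
        ≤ (S + ∑ i ∈ Finset.Icc 1 j, (lam j - lam i)) / lam j := by
    intro j hj1 hjm
    have hljpos := hlampos j hj1 hjm
    have hljlt := hlamlt1 j hj1 hjm
    rw [le_div_iff₀ hljpos]
    have hsum : ∑ i ∈ Finset.Icc 1 j, (lam j - lam i)
        = (j : ℝ) * lam j - ∑ i ∈ Finset.Icc 1 j, lam i := by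
      rw [Finset.sum_sub_distrib, Finset.sum_const, Nat.card_Icc, nsmul_eq_mul,
        Nat.add_sub_cancel]
    have hLsplit : L = (∑ i ∈ Finset.Icc 1 j, lam i) + ∑ i ∈ Finset.Icc (j + 1) m, lam i := by
      rw [hL]; exact mysplit1 _ hjm
    have hcard : (Finset.Icc (j + 1) m).card = m - j := by rw [Nat.card_Icc]; omega
    have hconst : ∑ _i ∈ Finset.Icc (j + 1) m, lam j = ((m - j : ℕ) : ℝ) * lam j := by
      rw [Finset.sum_const, hcard, nsmul_eq_mul]
    have hterm : ∑ _i ∈ Finset.Icc (j + 1) m, lam j ≤ ∑ i ∈ Finset.Icc (j + 1) m, lam i := by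
      apply Finset.sum_le_sum
      intro i hi
      rw [Finset.mem_Icc] at hi
      exact hlammono j i hj1 (by omega) hi.2
    have htail : ((m : ℝ) - (j : ℝ)) * lam j ≤ ∑ i ∈ Finset.Icc (j + 1) m, lam i := by
      rw [← Nat.cast_sub hjm]; linarith [hconst, hterm]
    have hb1 : (Ak - L) / ta k * lam j ≤ Ak - L := by
      have t1 : (Ak - L) / ta k ≤ Ak - L := div_le_self hAkL.le (htagt1 k hk1 hkp).le
      have t2 : (Ak - L) / ta k * lam j ≤ (Ak - L) / ta k :=
        mul_le_of_le_one_right hdivpos.le hljlt.le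
      linarith
    have hb2' : Dk ≤ S - Ak := by
      have hsplitS : S = Ak + ∑ j' ∈ Finset.Icc (k + 1) p, ta j' * (td j' : ℝ) := by
        rw [hS, hAk]; exact mysplit1 _ hkp
      have h : Dk ≤ ∑ j' ∈ Finset.Icc (k + 1) p, ta j' * (td j' : ℝ) := by
        rw [hDk]
        apply Finset.sum_le_sum
        intro i hi
        rw [Finset.mem_Icc] at hi
        have h1 := htagt1 i (by omega) hi.2
        exact le_mul_of_one_le_left (Nat.cast_nonneg _) h1.le
      linarith
    have hb2 : Dk * lam j ≤ S - Ak := by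
      have t3 : Dk * lam j ≤ Dk := mul_le_of_le_one_right hDknn hljlt.le
      linarith
    have expand : ((Ak - L) / ta k + Dk + (m : ℝ)) * lam j
        = (Ak - L) / ta k * lam j + Dk * lam j + (j : ℝ) * lam j
          + ((m : ℝ) - (j : ℝ)) * lam j := by ring
    rw [hsum]
    linarith [hb1, hb2, htail, hLsplit, expand]
  -- value of the G expression at k
  have hGkval : (∑ j ∈ Finset.Icc 1 k, (ta j / ta k) * (td j : ℝ)) + Dk
        + ∑ i ∈ Finset.Icc 1 m, (1 - lam i / ta k)
      = (Ak - L) / ta k + Dk + (m : ℝ) := by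
    rw [hDk, hAk, hL]; exact Gval lam ta td m p k
  have hmemk : k ∈ Finset.Icc 1 p := Finset.mem_Icc.mpr ⟨hk1, hkp⟩
  have hupper : κ ≤ (Ak - L) / ta k + Dk + (m : ℝ) := by
    rw [hκ]
    refine le_trans (min_le_right _ _) (le_trans (Finset.inf'_le _ hmemk) (le_of_eq ?_))
    rw [← hDk]
    exact hGkval
  have hlower : (Ak - L) / ta k + Dk + (m : ℝ) ≤ κ := by
    rw [hκ]
    refine le_min (Finset.le_inf' _ _ ?_) (Finset.le_inf' _ _ ?_)
    · intro j hj
      rw [Finset.mem_Icc] at hj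
      exact hFle j hj.1 hj.2
    · intro l hl
      rw [Finset.mem_Icc] at hl
      have hv := Gval lam ta td m p l
      rw [← hL] at hv
      have h2 : (Ak - L) / ta k + Dk + (m : ℝ)
          ≤ ((∑ j ∈ Finset.Icc 1 l, ta j * (td j : ℝ)) - L) / ta l
            + (∑ j ∈ Finset.Icc (l + 1) p, (td j : ℝ)) + (m : ℝ) := by
        linarith [hGle l hl.1 hl.2]
      exact le_of_le_of_eq h2 hv.symm
  have hκval : κ = (Ak - L) / ta k + Dk + (m : ℝ) := le_antisymm hupper hlower
  refine ⟨?_, ?_, ?_⟩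
  · rw [hκval]; exact hGkval.symm
  · rw [hκval]; linarith [hdivpos]
  · rw [hκval, mysplitlow (fun j => (td j : ℝ)) hkp]
    linarith [hdivle, hDk]
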